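/- In the a posteriori setting: ‖u − u_h‖_h ≤ C(‖Ru − u_h‖_h + ‖E_h φ_h − Π_h(E_h φ_h)‖_Q + ‖φ_h − R̄φ‖_h) and ‖φ − φ_h‖_h ≤ C(‖φ_h − R̄φ‖_h + ‖Ru − u_h‖_h + ‖E_h φ_h − Π_h(E_h φ_h)‖_Q). -/

import Mathlib

open RealInnerProductSpace

/-- Theorem 2.7: a posteriori bounds for the state and adjoint state in the
mesh norm.  `V` plays the role of `X + X_h`, `Xs` is the continuous velocity
space, `Ru`, `Rφ` are the reconstructions, and Theorem 2.6 provides the bound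
on `‖y − y_h‖_Q` (hypothesis `hybound`). -/
theorem stmt14 {V M W Q : Type*}
    [NormedAddCommGroup V] [NormedSpace ℝ V]
    [AddCommGroup M] [Module ℝ M]
    [NormedAddCommGroup W] [InnerProductSpace ℝ W]
    [NormedAddCommGroup Q] [InnerProductSpace ℝ Q]
    (Xs : Submodule ℝ V)
    (a : V →ₗ[ℝ] V →ₗ[ℝ] ℝ) (b : V →ₗ[ℝ] M →ₗ[ℝ] ℝ)
    (E : V →ₗ[ℝ] Q) (ιW : V →ₗ[ℝ] W)
    (Qh : Submodule ℝ Q) [Submodule.HasOrthogonalProjection Qh]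
    (lam alpha C0 Cy : ℝ)
    (hlam : 0 < lam) (halpha : 0 < alpha) (hC0 : 0 < C0) (hCy : 0 < Cy)
    (u Ru φ Rφ uh φh : V) (p R0p r R0r : M) (y yh : Q)
    (hu : u ∈ Xs) (hRu : Ru ∈ Xs) (hφ : φ ∈ Xs) (hRφ : Rφ ∈ Xs)
    -- Assumption I
    (hI : ∀ v : V, ‖ιW v‖ ≤ C0 * ‖v‖)
    -- Assumption II
    (hII : ∀ v : V, ‖E v‖ ≤ ‖v‖)
    -- Z-ellipticity of a
    (hell : ∀ v ∈ Xs, (∀ w : M, b v w = 0) → alpha * ‖v‖ ^ 2 ≤ a v v)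
    -- error equations (2.28)
    (h10 : ∀ z ∈ Xs, a (u - Ru) z + b z (p - R0p) = ⟪y - yh, E z⟫)
    (h10b : ∀ w : M, b (u - Ru) w = 0)
    (h11 : ∀ z ∈ Xs, a z (φ - Rφ) + b z (R0r - r) = ⟪ιW (u - uh), ιW z⟫)
    (h11b : ∀ w : M, b (φ - Rφ) w = 0)
    -- Theorem 2.6 bound on the control error
    (hybound : ‖y - yh‖ ≤ Cy * (‖E φh - (Submodule.orthogonalProjectionOnto Qh (E φh) : Q)‖
        + ‖φh - Rφ‖ + ‖Ru - uh‖)) :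
    ∃ C > 0,
      ‖u - uh‖ ≤ C * (‖Ru - uh‖
          + ‖E φh - (Submodule.orthogonalProjectionOnto Qh (E φh) : Q)‖ + ‖φh - Rφ‖) ∧
      ‖φ - φh‖ ≤ C * (‖φh - Rφ‖ + ‖Ru - uh‖
          + ‖E φh - (Submodule.orthogonalProjectionOnto Qh (E φh) : Q)‖) := by

  set e := u - Ru with he_def
  set f := φ - Rφ with hf_def
  set A := ‖Ru - uh‖ with hA
  set P := ‖E φh - (Submodule.orthogonalProjectionOnto Qh (E φh) : Q)‖ with hP
  set B := ‖φh - Rφ‖ with hB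
  have hA0 : (0:ℝ) ≤ A := norm_nonneg _
  have hP0 : (0:ℝ) ≤ P := norm_nonneg _
  have hB0 : (0:ℝ) ≤ B := norm_nonneg _
  have hS : (0:ℝ) ≤ A + P + B := by linarith
  -- ellipticity bound for e
  have heq : a e e = ⟪y - yh, E e⟫ := by
    have := h10 e (Xs.sub_mem hu hRu)
    rw [h10b (p - R0p)] at this
    linarith [this]
  have he2 : alpha * ‖e‖ ^ 2 ≤ ‖y - yh‖ * ‖e‖ := by
    have h1 := hell e (Xs.sub_mem hu hRu) h10b
    have h2 : ⟪y - yh, E e⟫ ≤ ‖y - yh‖ * ‖E e‖ := real_inner_le_norm _ _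
    have h3 : ‖y - yh‖ * ‖E e‖ ≤ ‖y - yh‖ * ‖e‖ :=
      mul_le_mul_of_nonneg_left (hII e) (norm_nonneg _)
    linarith [heq ▸ h1]
  have h1 : alpha * ‖e‖ ≤ ‖y - yh‖ := by
    rcases (norm_nonneg e).eq_or_lt with h | h
    · rw [← h, mul_zero]; exact norm_nonneg _
    · nlinarith [he2, h]
  -- ellipticity bound for f
  have heqf : a f f = ⟪ιW (u - uh), ιW f⟫ := by
    have := h11 f (Xs.sub_mem hφ hRφ)
    rw [h11b (R0r - r)] at this
    linarith [this]
  have hf2 : alpha * ‖f‖ ^ 2 ≤ C0 ^ 2 * ‖u - uh‖ * ‖f‖ := by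
    have h1 := hell f (Xs.sub_mem hφ hRφ) h11b
    have h2 : ⟪ιW (u - uh), ιW f⟫ ≤ ‖ιW (u - uh)‖ * ‖ιW f‖ := real_inner_le_norm _ _
    have h3 : ‖ιW (u - uh)‖ * ‖ιW f‖ ≤ (C0 * ‖u - uh‖) * (C0 * ‖f‖) :=
      mul_le_mul (hI _) (hI _) (norm_nonneg _) (by positivity)
    nlinarith [heqf ▸ h1]
  have h2 : alpha * ‖f‖ ≤ C0 ^ 2 * ‖u - uh‖ := by
    rcases (norm_nonneg f).eq_or_lt with h | h
    · rw [← h, mul_zero]; positivity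
    · nlinarith [hf2, h]
  -- triangle inequalities
  have t1 : ‖u - uh‖ ≤ ‖e‖ + A := norm_sub_le_norm_sub_add_norm_sub u Ru uh
  have t2 : ‖φ - φh‖ ≤ ‖f‖ + B := by
    have h := norm_sub_le_norm_sub_add_norm_sub φ Rφ φh
    rw [norm_sub_rev Rφ φh] at h
    exact h
  have g1 : alpha * ‖u - uh‖ ≤ (Cy + alpha) * (A + P + B) := by
    linarith [mul_le_mul_of_nonneg_left t1 halpha.le, h1, hybound,
      mul_nonneg halpha.le hP0, mul_nonneg halpha.le hB0]
  have a1 : alpha ^ 2 * ‖f‖ ≤ C0 ^ 2 * (alpha * ‖u - uh‖) :=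
    calc alpha ^ 2 * ‖f‖ = alpha * (alpha * ‖f‖) := by ring
      _ ≤ alpha * (C0 ^ 2 * ‖u - uh‖) := mul_le_mul_of_nonneg_left h2 halpha.le
      _ = C0 ^ 2 * (alpha * ‖u - uh‖) := by ring
  have a2 : C0 ^ 2 * (alpha * ‖u - uh‖) ≤ C0 ^ 2 * ((Cy + alpha) * (A + P + B)) :=
    mul_le_mul_of_nonneg_left g1 (by positivity)
  have a3 : alpha ^ 2 * ‖φ - φh‖ ≤ alpha ^ 2 * ‖f‖ + alpha ^ 2 * B := by
    have h := mul_le_mul_of_nonneg_left t2 (sq_nonneg alpha)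
    rw [mul_add] at h
    exact h
  have hy2 : alpha ^ 2 * B ≤ alpha ^ 2 * (A + P + B) :=
    mul_le_mul_of_nonneg_left (by linarith) (sq_nonneg alpha)
  have g2 : alpha ^ 2 * ‖φ - φh‖ ≤ (C0 ^ 2 * (Cy + alpha) + alpha ^ 2) * (A + P + B) := by
    linarith [a1, a2, a3, hy2]
  refine ⟨((Cy + alpha) * (C0 ^ 2 + alpha)) / alpha ^ 2 + 1, by positivity, ?_, ?_⟩
  · have key : ‖u - uh‖ * alpha ^ 2
        ≤ ((Cy + alpha) * (C0 ^ 2 + alpha) + alpha ^ 2) * (A + P + B) := by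
      linarith [mul_le_mul_of_nonneg_left g1 halpha.le,
        mul_nonneg (by positivity : (0:ℝ) ≤ (Cy + alpha) * C0 ^ 2 + alpha ^ 2) hS]
    rw [show ((Cy + alpha) * (C0 ^ 2 + alpha)) / alpha ^ 2 + 1
        = ((Cy + alpha) * (C0 ^ 2 + alpha) + alpha ^ 2) / alpha ^ 2 by field_simp]
    rw [div_mul_eq_mul_div, le_div_iff₀ (by positivity)]
    exact key
  · have key : ‖φ - φh‖ * alpha ^ 2
        ≤ ((Cy + alpha) * (C0 ^ 2 + alpha) + alpha ^ 2) * (B + A + P) := by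
      linarith [g2, mul_nonneg (by positivity : (0:ℝ) ≤ alpha * (Cy + alpha)) hS]
    rw [show ((Cy + alpha) * (C0 ^ 2 + alpha)) / alpha ^ 2 + 1
        = ((Cy + alpha) * (C0 ^ 2 + alpha) + alpha ^ 2) / alpha ^ 2 by field_simp]
    rw [div_mul_eq_mul_div, le_div_iff₀ (by positivity)]
    exact key
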